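/- Let A be a unital C*-algebra, p : ℝ → A a continuously differentiable, 2π-periodic path of orthogonal projections (p(t)* = p(t), p(t)² = p(t), p(t + 2π) = p(t) for all t), and v : ℝ → A a continuously differentiable solution of the monodromy equation v'(t) = [p'(t), p(t)]·v(t) with v(0) = p(0). Then v(2π) + 1 − p(0) is a unitary element of A: (v(2π) + 1 − p(0))*·(v(2π) + 1 − p(0)) = (v(2π) + 1 − p(0))·(v(2π) + 1 − p(0))* = 1. -/

import Mathlib

open Set in
/-- Grönwall-type uniqueness: a function vanishing at `a` whose derivative is controlled
linearly by itself vanishes on `[a, b]`. -/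
lemma zero_of_deriv_le {E : Type*} [NormedAddCommGroup E] [NormedSpace ℝ E]
    {f f' : ℝ → E} {a b K : ℝ}
    (hf : ∀ t, HasDerivAt f (f' t) t) (h0 : f a = 0)
    (hK : ∀ t ∈ Icc a b, ‖f' t‖ ≤ K * ‖f t‖) :
    ∀ t ∈ Icc a b, f t = 0 := by
  intro t ht
  have hcont : ContinuousOn f (Icc a b) :=
    fun x _ => ((hf x).continuousAt).continuousWithinAt
  have h := norm_le_gronwallBound_of_norm_deriv_right_le (f' := f') (δ := 0) (K := K)
    (ε := 0) hcont (fun x hx => (hf x).hasDerivWithinAt) (by simp [h0])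
    (fun x hx => by simpa using hK x (Ico_subset_Icc_self hx))
  have := h t ht
  rw [gronwallBound_ε0_δ0] at this
  exact norm_le_zero_iff.mp this

open scoped Real in
/-- **The monodromy of a periodic path of projections defines a unitary.**
Let `A` be a unital C*-algebra, `p : ℝ → A` a continuously differentiable `2π`-periodic
path of orthogonal projections, and `v : ℝ → A` a continuously differentiable solution of
the monodromy equation `v'(t) = [p'(t), p(t)]·v(t)` with `v(0) = p(0)`.  Then
`v(2π) + 1 − p(0)` is a unitary element of `A`. -/
theorem monodromy_plus_complement_unitary
    {A : Type*} [CStarAlgebra A]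
    (p : ℝ → A) (hp : ContDiff ℝ 1 p)
    (hsa : ∀ t : ℝ, star (p t) = p t) (hidem : ∀ t : ℝ, p t * p t = p t)
    (hper : ∀ t : ℝ, p (t + 2 * π) = p t)
    (v : ℝ → A) (hv' : ContDiff ℝ 1 v)
    (hv : ∀ t : ℝ, HasDerivAt v ((deriv p t * p t - p t * deriv p t) * v t) t)
    (hv0 : v 0 = p 0) :
    star (v (2 * π) + 1 - p 0) * (v (2 * π) + 1 - p 0) = 1 ∧
      (v (2 * π) + 1 - p 0) * star (v (2 * π) + 1 - p 0) = 1 := by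
  set a : ℝ → A := fun t => deriv p t * p t - p t * deriv p t with ha_def
  have hpd : ∀ t, HasDerivAt p (deriv p t) t :=
    fun t => (hp.differentiable one_ne_zero t).hasDerivAt
  -- `deriv p` is self-adjoint
  have hdsa : ∀ t, star (deriv p t) = deriv p t := by
    intro t
    have h1 : HasDerivAt (fun s => star (p s)) (star (deriv p t)) t := (hpd t).star
    have h2 : HasDerivAt p (star (deriv p t)) t := by
      simpa only [funext hsa] using h1
    exact h2.unique (hpd t)
  -- Leibniz: p'p + pp' = p'
  have hleib : ∀ t, deriv p t * p t + p t * deriv p t = deriv p t := by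
    intro t
    have h1 : HasDerivAt (fun s => p s * p s)
        (deriv p t * p t + p t * deriv p t) t := (hpd t).mul (hpd t)
    have h2 : HasDerivAt p (deriv p t * p t + p t * deriv p t) t := by
      simpa only [funext hidem] using h1
    exact h2.unique (hpd t)
  -- p p' p = 0
  have hppp : ∀ t, p t * deriv p t * p t = 0 := by
    intro t
    have := congrArg (fun x => p t * x) (hleib t)
    simp only [mul_add, ← mul_assoc, hidem t] at this
    exact add_eq_right.mp this
  -- star a = -a
  have hastar : ∀ t, star (a t) = - a t := by
    intro t
    simp only [ha_def, star_sub, star_mul, hsa, hdsa, neg_sub]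
  -- p' = a p - p a
  have hode_p : ∀ t, HasDerivAt p (a t * p t - p t * a t) t := by
    intro t
    have : a t * p t - p t * a t = deriv p t := by
      show (deriv p t * p t - p t * deriv p t) * p t
          - p t * (deriv p t * p t - p t * deriv p t) = deriv p t
      have e : (deriv p t * p t - p t * deriv p t) * p t
          - p t * (deriv p t * p t - p t * deriv p t)
          = deriv p t * (p t * p t) + (p t * p t) * deriv p t
            - (p t * deriv p t * p t + p t * deriv p t * p t) := by
        noncomm_ring
      rw [e, hidem t, hppp t, add_zero, sub_zero, hleib t]
    rw [this]; exact hpd t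
  -- the function w = v v* satisfies w' = a w - w a
  set w : ℝ → A := fun t => v t * star (v t) with hw_def
  have hode_w : ∀ t, HasDerivAt w (a t * w t - w t * a t) t := by
    intro t
    have h1 : HasDerivAt w (a t * v t * star (v t) + v t * star (a t * v t)) t :=
      (hv t).mul (hv t).star
    have : a t * v t * star (v t) + v t * star (a t * v t) = a t * w t - w t * a t := by
      rw [star_mul, hastar t]
      simp only [hw_def, mul_neg, mul_assoc, sub_eq_add_neg]
    rwa [this] at h1
  -- f = w - p satisfies f' = a f - f a, f 0 = 0
  set f : ℝ → A := fun t => w t - p t with hf_def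
  have hode_f : ∀ t, HasDerivAt f (a t * f t - f t * a t) t := by
    intro t
    have h1 := (hode_w t).sub (hode_p t)
    have : a t * w t - w t * a t - (a t * p t - p t * a t) = a t * f t - f t * a t := by
      simp only [hf_def, mul_sub, sub_mul]; abel
    rwa [this] at h1
  have hf0 : f 0 = 0 := by
    simp only [hf_def, hw_def, hv0, hsa 0, hidem 0, sub_self]
  -- a is continuous, hence bounded on [0, 2π]
  have hacont : Continuous a := by
    have h1 : Continuous (deriv p) := (hp.iterate_deriv' 0 1).continuous
    exact (h1.mul hp.continuous).sub (hp.continuous.mul h1)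
  obtain ⟨K, hK⟩ : ∃ K, ∀ t ∈ Set.Icc (0:ℝ) (2*π), ‖a t‖ ≤ K :=
    (isCompact_Icc (a := (0:ℝ)) (b := 2*π)).exists_bound_of_continuousOn
      hacont.continuousOn
  -- f vanishes on [0, 2π] by Grönwall, hence v(2π) v(2π)* = p(2π) = p 0
  have hf2π : f (2 * π) = 0 := by
    refine zero_of_deriv_le (f' := fun t => a t * f t - f t * a t) (K := 2 * K) (b := 2 * π)
      hode_f hf0 (fun t ht => ?_) (2 * π) ?_
    · calc ‖a t * f t - f t * a t‖ ≤ ‖a t * f t‖ + ‖f t * a t‖ := norm_sub_le _ _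
        _ ≤ ‖a t‖ * ‖f t‖ + ‖f t‖ * ‖a t‖ := add_le_add (norm_mul_le _ _) (norm_mul_le _ _)
        _ ≤ K * ‖f t‖ + ‖f t‖ * K := by
            have h1 := hK t ht
            have h2 : (0:ℝ) ≤ ‖f t‖ := norm_nonneg _
            nlinarith
        _ = 2 * K * ‖f t‖ := by ring
    · exact Set.mem_Icc.mpr ⟨by positivity, le_refl _⟩
  have hvv_star : v (2 * π) * star (v (2 * π)) = p 0 := by
    have hw2 : w (2 * π) - p (2 * π) = 0 := hf2π
    have hp2 : p (2 * π) = p 0 := by simpa using hper 0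
    have := sub_eq_zero.mp hw2
    rw [hp2] at this
    exact this
  -- v* v is constant: its derivative is zero
  have hstar_vv : star (v (2 * π)) * v (2 * π) = p 0 := by
    set g : ℝ → A := fun t => star (v t) * v t with hg_def
    have hg : ∀ t, HasDerivAt g 0 t := by
      intro t
      have h1 : HasDerivAt g
          (star (a t * v t) * v t + star (v t) * (a t * v t)) t :=
        (hv t).star.mul (hv t)
      have : star (a t * v t) * v t + star (v t) * (a t * v t) = 0 := by
        rw [star_mul, hastar t]
        simp only [mul_neg, neg_mul, mul_assoc]
        exact neg_add_cancel _
      rwa [this] at h1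
    have hconst : g (2 * π) = g 0 :=
      is_const_of_deriv_eq_zero (fun t => (hg t).differentiableAt)
        (fun t => (hg t).deriv) _ _
    rw [hg_def] at hconst
    simpa [hv0, hsa 0, hidem 0] using hconst
  -- algebraic conclusion
  set V := v (2 * π) with hV
  set P := p 0 with hP
  have hPP : P * P = P := hidem 0
  have hPs : star P = P := hsa 0
  -- V P = V
  have hVP : V * P = V := by
    have hx : star (V * P - V) * (V * P - V) = 0 := by
      have e : star (V * P - V) * (V * P - V)
          = P * (star V * V) * P - P * (star V * V) - star V * V * P + star V * V := by
        simp only [star_sub, star_mul, hPs]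
        noncomm_ring
      rw [e, hstar_vv]
      simp only [hPP]
      abel
    have : ‖V * P - V‖ = 0 := by
      have h2 : ‖star (V * P - V) * (V * P - V)‖ = ‖V * P - V‖ * ‖V * P - V‖ :=
        CStarRing.norm_star_mul_self
      rw [hx, norm_zero] at h2
      nlinarith [norm_nonneg (V * P - V)]
    exact sub_eq_zero.mp (norm_eq_zero.mp this)
  have hPV : P * V = V := by
    have : P * V = (V * star V) * V := by rw [hvv_star]
    rw [this, mul_assoc, hstar_vv, hVP]
  have hVsP : star V * P = star V := by
    have := congrArg star hPV
    rwa [star_mul, hPs] at this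
  have hPVs : P * star V = star V := by
    have := congrArg star hVP
    rwa [star_mul, hPs] at this
  constructor
  · rw [star_sub, star_add, star_one, hPs]
    calc (star V + 1 - P) * (V + 1 - P)
        = star V * V + (star V - star V * P) + (V - P * V) + (1 - P - P + P * P) := by
          noncomm_ring
      _ = 1 := by rw [hstar_vv, hVsP, hPV, hPP]; simp
  · rw [star_sub, star_add, star_one, hPs]
    calc (V + 1 - P) * (star V + 1 - P)
        = V * star V + (V - V * P) + (star V - P * star V) + (1 - P - P + P * P) := by
          noncomm_ring
      _ = 1 := by rw [hvv_star, hVP, hPVs, hPP]; simp
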